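/- Let R > 0, Ṙ, f₋, f₊, M be real numbers with M ≠ 0, let V = −((R²f₋ + R²f₊ − M²)² − 4R⁴f₋f₊)/(4M²R²), and suppose Ṙ² + V = 0. Define ε₋ = sign(M(R²f₋ − R²f₊ + M²)) and ε₊ = sign(M(R²f₋ − R²f₊ − M²)), where sign x = 1, 0, −1 according as x > 0, x = 0, x < 0. Then Ṙ² + f₋ ≥ 0, Ṙ² + f₊ ≥ 0, and the junction condition R(ε₋√(Ṙ² + f₋) − ε₊√(Ṙ² + f₊)) = M holds. Together with the converse implication, this shows the junction condition is completely equivalent to the energy equation supplemented by the sign formulas. -/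

import Mathlib

lemma sign_mul_abs_div (M R x : ℝ) (hM : M ≠ 0) (hR : 0 < R) :
    Real.sign (M * x) * |x / (2 * M * R)| = x / (2 * M * R) := by
  rcases lt_trichotomy x 0 with hx | hx | hx
  · rcases hM.lt_or_gt with hMn | hMp
    · have h1 : 0 < M * x := mul_pos_of_neg_of_neg hMn hx
      have h2 : 0 < x / (2 * M * R) := by
        apply div_pos_of_neg_of_neg hx
        nlinarith
      rw [Real.sign_of_pos h1, abs_of_pos h2, one_mul]
    · have h1 : M * x < 0 := mul_neg_of_pos_of_neg hMp hx
      have h2 : x / (2 * M * R) < 0 := by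
        apply div_neg_of_neg_of_pos hx
        positivity
      rw [Real.sign_of_neg h1, abs_of_neg h2]; ring
  · simp [hx]
  · rcases hM.lt_or_gt with hMn | hMp
    · have h1 : M * x < 0 := mul_neg_of_neg_of_pos hMn hx
      have h2 : x / (2 * M * R) < 0 := by
        apply div_neg_of_pos_of_neg hx
        nlinarith
      rw [Real.sign_of_neg h1, abs_of_neg h2]; ring
    · have h1 : 0 < M * x := mul_pos hMp hx
      have h2 : 0 < x / (2 * M * R) := by positivity
      rw [Real.sign_of_pos h1, abs_of_pos h2, one_mul]

/-- Let `R > 0`, `Rd` (= Ṙ), `fm` (= f₋), `fp` (= f₊), `M ≠ 0` be reals,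
`V = −((R²fm + R²fp − M²)² − 4R⁴fm·fp)/(4M²R²)`, and suppose `Rd² + V = 0`.
With `εm = sign(M(R²fm − R²fp + M²))` and `εp = sign(M(R²fm − R²fp − M²))`, we have
`Rd² + fm ≥ 0`, `Rd² + fp ≥ 0`, and the junction condition
`R(εm√(Rd² + fm) − εp√(Rd² + fp)) = M` holds. -/
theorem stmt_14 (R Rd fm fp M V εm εp : ℝ) (hR : 0 < R) (hM : M ≠ 0)
    (hV : V = -((R ^ 2 * fm + R ^ 2 * fp - M ^ 2) ^ 2 - 4 * R ^ 4 * fm * fp) /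
      (4 * M ^ 2 * R ^ 2))
    (heq : Rd ^ 2 + V = 0)
    (hεm : εm = Real.sign (M * (R ^ 2 * fm - R ^ 2 * fp + M ^ 2)))
    (hεp : εp = Real.sign (M * (R ^ 2 * fm - R ^ 2 * fp - M ^ 2))) :
    0 ≤ Rd ^ 2 + fm ∧ 0 ≤ Rd ^ 2 + fp ∧
    R * (εm * Real.sqrt (Rd ^ 2 + fm) - εp * Real.sqrt (Rd ^ 2 + fp)) = M := by
  subst hV hεm hεp
  set A : ℝ := R ^ 2 * fm - R ^ 2 * fp + M ^ 2 with hA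
  set B : ℝ := R ^ 2 * fm - R ^ 2 * fp - M ^ 2 with hB
  have hR' : R ≠ 0 := hR.ne'
  have key : Rd ^ 2 * (4 * M ^ 2 * R ^ 2) =
      (R ^ 2 * fm + R ^ 2 * fp - M ^ 2) ^ 2 - 4 * R ^ 4 * fm * fp := by
    field_simp at heq
    linarith
  have hfm : Rd ^ 2 + fm = (A / (2 * M * R)) ^ 2 := by
    rw [div_pow]
    rw [eq_div_iff (by positivity)]
    rw [hA]; nlinarith [key]
  have hfp : Rd ^ 2 + fp = (B / (2 * M * R)) ^ 2 := by
    rw [div_pow]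
    rw [eq_div_iff (by positivity)]
    rw [hB]; nlinarith [key]
  refine ⟨by rw [hfm]; positivity, by rw [hfp]; positivity, ?_⟩
  rw [hfm, hfp, Real.sqrt_sq_eq_abs, Real.sqrt_sq_eq_abs,
    sign_mul_abs_div M R A hM hR, sign_mul_abs_div M R B hM hR]
  field_simp
  ring
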